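/- Let {M_n} be a nonnegative supermartingale of the form M_n^λ = exp(-3λ f(X_n) + λ δ (n ∧ T)) where T is a stopping time, f(X_T) ≤ 0 on {X_T · ℓ ≤ m}, f(X_0) ≥ 0, λ > 0, δ > 0. Then P(X_T · ℓ ≤ m) ≤ exp(-3λ f(X_0)). In particular, applied to Kalikow's chain on a truncated cone V_m starting at y ∈ V_m, with f(y) = y·ℓ - ζ|y||ℓ|, one gets P̂_{V_m}(X_{T_{V_m^c}} · ℓ ≤ m | X_0 = y) ≤ exp(-3λ f(y)). -/

import Mathlib

open MeasureTheory ProbabilityTheory Real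
open scoped ENNReal

/-- Optional-stopping estimate: if `exp(-3λ f(X_n) + λδ (n ∧ T))` is a nonnegative
supermartingale, `T` a stopping time, `f(X_T) ≤ 0` on `{X_T ⬝ ℓ ≤ m}`, and
`X_0 ≡ x₀` with `f(x₀) ≥ 0`, then `P(X_T ⬝ ℓ ≤ m) ≤ exp(-3λ f(x₀))`. -/
theorem statement9
    {Ω : Type*} {m0 : MeasurableSpace Ω} (μ : Measure Ω) [IsProbabilityMeasure μ]
    (𝒢 : Filtration ℕ m0)
    {d : ℕ} (X : ℕ → Ω → (Fin d → ℝ)) (f : (Fin d → ℝ) → ℝ)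
    (ℓ : Fin d → ℝ) (m : ℝ) (lam δ : ℝ) (hlam : 0 < lam) (hδ : 0 < δ)
    (T : Ω → ℕ) (hT : MeasureTheory.IsStoppingTime 𝒢 (fun ω => (T ω : WithTop ℕ)))
    (hsuper : Supermartingale
      (fun n ω => Real.exp (-(3 * lam) * f (X n ω) + lam * δ * (min n (T ω) : ℝ))) 𝒢 μ)
    (x₀ : Fin d → ℝ) (hX0 : ∀ ω, X 0 ω = x₀) (hf0 : 0 ≤ f x₀)
    (hbdry : ∀ ω, (∑ i, X (T ω) ω i * ℓ i) ≤ m → f (X (T ω) ω) ≤ 0) :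
    μ {ω | (∑ i, X (T ω) ω i * ℓ i) ≤ m} ≤ ENNReal.ofReal (Real.exp (-(3 * lam) * f x₀)) := by
  set M : ℕ → Ω → ℝ :=
    fun n ω => Real.exp (-(3 * lam) * f (X n ω) + lam * δ * (min n (T ω) : ℝ)) with hM
  set A : Set Ω := {ω | (∑ i, X (T ω) ω i * ℓ i) ≤ m} with hA
  -- the stopped times
  set τ : ℕ → Ω → WithTop ℕ := fun n ω => min (n : WithTop ℕ) (T ω) with hτdef
  have hτ : ∀ n, IsStoppingTime 𝒢 (τ n) := fun n => (isStoppingTime_const 𝒢 n).min hT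
  have hτ_le : ∀ n ω, τ n ω ≤ (n : WithTop ℕ) := fun n ω => min_le_left _ _
  have hsub : Submartingale (fun n ω => -(M n ω)) 𝒢 μ := hsuper.neg
  -- value of M at time 0
  have hM0 : ∀ ω, M 0 ω = Real.exp (-(3 * lam) * f x₀) := by
    intro ω
    simp [hM, hX0 ω]
  -- the key per-n estimate
  have key : ∀ n : ℕ, μ (A ∩ {ω | T ω ≤ n}) ≤ ENNReal.ofReal (Real.exp (-(3 * lam) * f x₀)) := by
    intro n
    have hint : Integrable (stoppedValue M (τ n)) μ := by
      have h := (hsub.integrable_stoppedValue (hτ n) (hτ_le n)).neg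
      exact h.congr (Filter.Eventually.of_forall fun ω => by simp [stoppedValue])
    -- optional stopping: E[stoppedValue M (τ n)] ≤ E[M 0]
    have hos : ∫ ω, stoppedValue M (τ n) ω ∂μ ≤ ∫ ω, M 0 ω ∂μ := by
      have h := hsub.expected_stoppedValue_mono (isStoppingTime_const 𝒢 0) (hτ n)
        (fun ω => le_min (WithTop.coe_le_coe.mpr (Nat.zero_le n)) (WithTop.coe_le_coe.mpr (Nat.zero_le _))) (hτ_le n)
      have h' : ∫ ω, -(stoppedValue M (fun _ => 0) ω) ∂μ ≤
          ∫ ω, -(stoppedValue M (τ n) ω) ∂μ := by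
        simpa [stoppedValue] using h
      rw [integral_neg, integral_neg] at h'
      have := neg_le_neg_iff.mp h'
      simpa [stoppedValue] using this
    have hE0 : ∫ ω, M 0 ω ∂μ = Real.exp (-(3 * lam) * f x₀) := by
      rw [show (fun ω => M 0 ω) = fun _ : Ω => Real.exp (-(3 * lam) * f x₀) from
        funext hM0, integral_const]
      simp
    -- on A ∩ {T ≤ n}, stoppedValue M (τ n) ≥ 1
    have hsubset : A ∩ {ω | T ω ≤ n} ⊆ {ω | 1 ≤ stoppedValue M (τ n) ω} := by
      rintro ω ⟨hωA, hωT⟩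
      have hmin : τ n ω = T ω := min_eq_right (by exact_mod_cast hωT)
      have hf_le : f (X (T ω) ω) ≤ 0 := hbdry ω hωA
      have : (0 : ℝ) ≤ -(3 * lam) * f (X (T ω) ω) + lam * δ * (min (T ω) (T ω) : ℝ) := by
        have h1 : (0:ℝ) ≤ -(3 * lam) * f (X (T ω) ω) := by
          have := mul_nonneg (by positivity : (0:ℝ) ≤ 3 * lam) (neg_nonneg.2 hf_le)
          nlinarith
        have h2 : (0:ℝ) ≤ lam * δ * (min (T ω) (T ω) : ℝ) := by positivity
        linarith
      have : (1:ℝ) ≤ M (T ω) ω := by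
        simpa [hM] using Real.one_le_exp this
      show 1 ≤ M (τ n ω).untopA ω; rw [hmin]; exact this
    have hmarkov : (μ {ω | 1 ≤ stoppedValue M (τ n) ω}).toReal ≤
        ∫ ω, stoppedValue M (τ n) ω ∂μ := by
      have h := mul_meas_ge_le_integral_of_nonneg
        (Filter.Eventually.of_forall fun ω => Real.exp_nonneg _ : 0 ≤ᵐ[μ]
          fun ω => stoppedValue M (τ n) ω) hint 1
      simpa [Measure.real] using h
    calc μ (A ∩ {ω | T ω ≤ n}) ≤ μ {ω | 1 ≤ stoppedValue M (τ n) ω} := measure_mono hsubset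
      _ = ENNReal.ofReal ((μ {ω | 1 ≤ stoppedValue M (τ n) ω}).toReal) :=
          (ENNReal.ofReal_toReal (measure_ne_top μ _)).symm
      _ ≤ ENNReal.ofReal (Real.exp (-(3 * lam) * f x₀)) := by
          apply ENNReal.ofReal_le_ofReal
          calc (μ {ω | 1 ≤ stoppedValue M (τ n) ω}).toReal
              ≤ ∫ ω, stoppedValue M (τ n) ω ∂μ := hmarkov
            _ ≤ ∫ ω, M 0 ω ∂μ := hos
            _ = _ := hE0
  -- take the limit in n
  have hmono : Monotone fun n => A ∩ {ω | T ω ≤ n} := by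
    intro a b hab
    exact Set.inter_subset_inter_right _ fun ω hω => le_trans hω hab
  have hUnion : (⋃ n, A ∩ {ω | T ω ≤ n}) = A := by
    ext ω
    simp only [Set.mem_iUnion, Set.mem_inter_iff, Set.mem_setOf_eq]
    exact ⟨fun ⟨n, h, _⟩ => h, fun h => ⟨T ω, h, le_refl _⟩⟩
  have htend := tendsto_measure_iUnion_atTop (μ := μ) hmono
  rw [hUnion] at htend
  exact le_of_tendsto' htend key
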